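/- Let 𝒜 be an L-structure, ℬ an L'-structure, and (g, f) a semi-retraction between 𝒜 and ℬ. Let ā and b̄ be finite tuples from 𝒜 each of which enumerates a substructure of 𝒜 (i.e., the range of each tuple is the underlying set of a substructure of 𝒜). Then for every finite tuple b̄₀' from ℬ with the same quantifier-free type in ℬ as g(b̄), the following holds: for every tuple c̄₁ of length |ā| whose entries lie in the substructure of 𝒜 generated by the range of f(b̄₀') and which has the same quantifier-free type in 𝒜 as ā, every entry of c̄₁ lies in the image under f of the range of b̄₀', and the unique tuple c̄₀ from the range of b̄₀' with f(c̄₀) = c̄₁ (entrywise) has the same quantifier-free type in ℬ as g(ā). (In the paper's terminology: b̄₀' has the restricted inverse images under f property for ā witnessed by g(ā).) -/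
import Mathlib


open FirstOrder FirstOrder.Language

/-- Two same-length tuples have the same quantifier-free type over ∅. -/
def SameQfType (L : FirstOrder.Language) (M : Type*) [L.Structure M] {n : ℕ}
    (x y : Fin n → M) : Prop :=
  ∀ φ : L.Formula (Fin n), φ.IsQF → (φ.Realize x ↔ φ.Realize y)

/-- A qftp-respecting injection between structures in possibly different languages. -/
def QftpRespecting (L L' : FirstOrder.Language) (M N : Type*) [L.Structure M] [L'.Structure N]
    (h : M → N) : Prop :=
  Function.Injective h ∧
    ∀ (n : ℕ) (x y : Fin n → M), SameQfType L M x y → SameQfType L' N (h ∘ x) (h ∘ y)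

/-- `(g, f)` is a semi-retraction between `M` and `N`: both maps are qftp-respecting
injections and `f ∘ g` is qftp-preserving (equivalently, an `L`-embedding of `M` into `M`). -/
def IsSemiRetraction (L L' : FirstOrder.Language) (M N : Type*)
    [L.Structure M] [L'.Structure N] (g : M → N) (f : N → M) : Prop :=
  QftpRespecting L L' M N g ∧ QftpRespecting L' L N M f ∧
    ∀ (n : ℕ) (x : Fin n → M), SameQfType L M x (f ∘ g ∘ x)

/-- `M` is locally finite: every finitely generated substructure is finite. -/
def StructLocallyFinite (L : FirstOrder.Language) (M : Type*) [L.Structure M] : Prop :=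
  ∀ S : L.Substructure M, S.FG → (S : Set M).Finite

/-- `M → (B)^A_{r,d}` for substructures. -/
def ArrowSub (L : FirstOrder.Language) (M : Type*) [L.Structure M]
    (A B : L.Substructure M) (r d : ℕ) : Prop :=
  ∀ c : L.Substructure M → Fin r, ∃ B' : L.Substructure M,
    Nonempty (B' ≃[L] B) ∧
      (c '' {A' : L.Substructure M | A' ≤ B' ∧ Nonempty (A' ≃[L] A)}).ncard ≤ d

/-- `M →ᵉ (B)^A_{r,d}` for embeddings. -/
def ArrowEmb (L : FirstOrder.Language) (M : Type*) [L.Structure M]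
    (A B : L.Substructure M) (r d : ℕ) : Prop :=
  ∀ c : (A ↪[L] M) → Fin r, ∃ h : B ↪[L] M,
    (c '' {j : A ↪[L] M | ∃ e : A ↪[L] B, j = h.comp e}).ncard ≤ d

/-- A structure is rigid if its only automorphism is the identity. -/
def IsRigidStructure (L : FirstOrder.Language) (M : Type*) [L.Structure M] : Prop :=
  ∀ σ : M ≃[L] M, ∀ x : M, σ x = x


section Aux

variable {L : FirstOrder.Language} {M : Type*} [L.Structure M]

lemma SameQfType.symm' {n : ℕ} {x y : Fin n → M} (h : SameQfType L M x y) :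
    SameQfType L M y x := fun φ hφ => (h φ hφ).symm

lemma SameQfType.trans' {n : ℕ} {x y z : Fin n → M} (h : SameQfType L M x y)
    (h' : SameQfType L M y z) : SameQfType L M x z :=
  fun φ hφ => (h φ hφ).trans (h' φ hφ)

lemma SameQfType.comp' {n p : ℕ} {x y : Fin n → M} (h : SameQfType L M x y)
    (j : Fin p → Fin n) : SameQfType L M (x ∘ j) (y ∘ j) := by
  intro φ hφ
  rw [← Formula.realize_relabel, ← Formula.realize_relabel]
  exact h (φ.relabel j) (hφ.relabel _)

end Aux

/-- Proposition 5.12 / `prop_fcn_restricted`: given a semi-retraction `(g, f)`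
between `𝒜` and `ℬ` and finite tuples `ā, b̄` enumerating substructures of `𝒜`, every tuple
`b̄₀'` with the same quantifier-free type in `ℬ` as `g(b̄)` has the restricted inverse images
under `f` property for `ā` witnessed by `g(ā)`. -/
theorem restricted_inverse_images_under_f
    {L L' : FirstOrder.Language} {M N : Type*} [L.Structure M] [L'.Structure N]
    (g : M → N) (f : N → M)
    (hsr : IsSemiRetraction L L' M N g f)
    {m k : ℕ} (a : Fin m → M) (b : Fin k → M)
    (ha : ((Substructure.closure L (Set.range a) : L.Substructure M) : Set M) = Set.range a)
    (hb : ((Substructure.closure L (Set.range b) : L.Substructure M) : Set M) = Set.range b)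
    (b₀' : Fin k → N) (hb₀' : SameQfType L' N b₀' (g ∘ b))
    (c₁ : Fin m → M)
    (hc₁mem : ∀ i, c₁ i ∈ Substructure.closure L (Set.range (f ∘ b₀')))
    (hc₁tp : SameQfType L M c₁ a) :
    (∀ i, ∃ j, f (b₀' j) = c₁ i) ∧
      ∀ c₀ : Fin m → N, (∀ i, ∃ j, c₀ i = b₀' j) → (∀ i, f (c₀ i) = c₁ i) →
        SameQfType L' N c₀ (g ∘ a) := by
  obtain ⟨⟨ginj, gq⟩, ⟨finj, fq⟩, hfg⟩ := hsr
  -- `f ∘ b₀'` has the same qf type as `b`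
  have hfb : SameQfType L M (f ∘ b₀') b :=
    (fq k b₀' (g ∘ b) hb₀').trans' (hfg k b).symm'
  -- the range of `f ∘ b₀'` is closed under functions
  have hclosed : ∀ {n : ℕ} (F : L.Functions n) (xs : Fin n → M),
      (∀ i, xs i ∈ Set.range (f ∘ b₀')) → Structure.funMap F xs ∈ Set.range (f ∘ b₀') := by
    intro n F xs hxs
    choose σ hσ using hxs
    have hbmem : Structure.funMap F (b ∘ σ) ∈ Set.range b := by
      rw [← hb]
      exact Substructure.fun_mem _ F _ fun i =>
        Substructure.subset_closure (Set.mem_range_self (σ i))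
    obtain ⟨j₀, hj₀⟩ := hbmem
    set φ : L.Formula (Fin k) :=
      Term.equal (Term.func F fun i => Term.var (σ i)) (Term.var j₀) with hφdef
    have hqf : φ.IsQF := (BoundedFormula.IsAtomic.equal _ _).isQF
    have hφb : φ.Realize b := by
      simp only [hφdef, Formula.realize_equal, Term.realize_func, Term.realize_var]
      exact hj₀.symm
    have hφfb : φ.Realize (f ∘ b₀') := (hfb φ hqf).2 hφb
    simp only [hφdef, Formula.realize_equal, Term.realize_func, Term.realize_var] at hφfb
    refine ⟨j₀, ?_⟩
    rw [← hφfb]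
    congr 1
    funext i
    exact hσ i
  -- hence the closure of the range of `f ∘ b₀'` is just its range
  have hS : ((Substructure.closure L (Set.range (f ∘ b₀')) : L.Substructure M) : Set M)
      = Set.range (f ∘ b₀') := by
    refine le_antisymm ?_ Substructure.subset_closure
    exact (Substructure.closure_le (S :=
      { carrier := Set.range (f ∘ b₀'),
        fun_mem := fun {n} F xs hxs => hclosed F xs hxs })).2 le_rfl
  have hmem : ∀ i, ∃ j, f (b₀' j) = c₁ i := by
    intro i
    have := hc₁mem i
    rw [← SetLike.mem_coe, hS] at this
    exact this
  refine ⟨hmem, ?_⟩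
  intro c₀ hc₀ hfc₀
  choose j hj using hc₀
  have hc₀eq : c₀ = b₀' ∘ j := funext hj
  -- `c₀` has the same qf type as `g ∘ (b ∘ j)`
  have hA : SameQfType L' N c₀ ((g ∘ b) ∘ j) := by
    rw [hc₀eq]; exact hb₀'.comp' j
  -- `c₁` has the same qf type as `b ∘ j`
  have hc₁eq : c₁ = (f ∘ b₀') ∘ j := by
    funext i
    rw [← hfc₀ i, hc₀eq]
    rfl
  have hB : SameQfType L M c₁ (b ∘ j) := by
    rw [hc₁eq]; exact hfb.comp' j
  have hba : SameQfType L M (b ∘ j) a := hB.symm'.trans' hc₁tp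
  exact hA.trans' (gq m (b ∘ j) a hba)
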